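/- arXiv:1305.6050 — 2 statements merged into one kernel-verified Lean document; each statement's English description precedes it below -/
import Mathlib

section
/- Let Λ be a free abelian group of finite rank and 1 → S¹ → Λ̂ → Λ → 1 a central extension of Λ by S¹ = ℝ/ℤ whose commutator map is b : Λ × Λ → S¹. Suppose B : Λ × Λ → ℝ is an antisymmetric biadditive form with [B(λ,μ)] = b(λ,μ) for all λ,μ ∈ Λ. Then there exists a set-theoretic section τ : Λ → Λ̂ satisfying τ(λ)τ(μ) = τ(λ+μ)·[½ B(λ,μ)] for all λ,μ ∈ Λ. -/
namespace HalfFormAux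

variable {S : Type*} [AddCommGroup S] {Λ : Type*} [AddCommGroup Λ]

def Tw (S Λ : Type*) := S × Λ

def twAdd (d : Λ → Λ → S) (x y : Tw S Λ) : Tw S Λ :=
  (x.1 + y.1 + d x.2 y.2, x.2 + y.2)

def twZero : Zero (Tw S Λ) := ⟨((0 : S), (0 : Λ))⟩

def twAddInst (d : Λ → Λ → S) : Add (Tw S Λ) := ⟨twAdd d⟩

def twNegInst (d : Λ → Λ → S) : Neg (Tw S Λ) :=
  ⟨fun x => (-x.1 - d x.2 (-x.2), -x.2)⟩

def twGroup (d : Λ → Λ → S)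
    (hco : ∀ a b c, d b c + d a (b + c) = d (a + b) c + d a b)
    (hsym : ∀ a b, d a b = d b a)
    (h0 : ∀ b, d 0 b = 0) : AddCommGroup (Tw S Λ) :=
  letI : Zero (Tw S Λ) := twZero
  letI : Add (Tw S Λ) := twAddInst d
  letI : Neg (Tw S Λ) := twNegInst d
  { add := (· + ·)
    zero := 0
    neg := Neg.neg
    nsmul := nsmulRec
    zsmul := zsmulRec
    add_assoc := fun x y z => by
      show twAdd d (twAdd d x y) z = twAdd d x (twAdd d y z)
      unfold twAdd
      refine Prod.ext ?_ (add_assoc _ _ _)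
      dsimp only
      have h : d (x.2 + y.2) z.2 = d y.2 z.2 + d x.2 (y.2 + z.2) - d x.2 y.2 := by
        rw [eq_sub_iff_add_eq]; exact (hco x.2 y.2 z.2).symm
      rw [h]; abel
    zero_add := fun x => by
      show twAdd d ((0 : S), (0 : Λ)) x = x
      unfold twAdd
      refine Prod.ext ?_ (zero_add _)
      dsimp only
      rw [h0]; abel
    add_zero := fun x => by
      show twAdd d x ((0 : S), (0 : Λ)) = x
      unfold twAdd
      refine Prod.ext ?_ (add_zero _)
      dsimp only
      rw [hsym, h0]; abel
    neg_add_cancel := fun x => by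
      show twAdd d (-x.1 - d x.2 (-x.2), -x.2) x = ((0 : S), (0 : Λ))
      unfold twAdd
      refine Prod.ext ?_ (neg_add_cancel _)
      dsimp only
      rw [hsym]; abel
    add_comm := fun x y => by
      show twAdd d x y = twAdd d y x
      unfold twAdd
      refine Prod.ext ?_ (add_comm _ _)
      dsimp only
      rw [hsym]; abel }

theorem split_cocycle [Module.Free ℤ Λ] (d : Λ → Λ → S)
    (hco : ∀ a b c, d b c + d a (b + c) = d (a + b) c + d a b)
    (hsym : ∀ a b, d a b = d b a)
    (h00 : d 0 0 = 0) :
    ∃ φ : Λ → S, ∀ a b, φ a + φ b - φ (a + b) = d a b := by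
  have h0 : ∀ b, d 0 b = 0 := by
    intro b
    have h := hco 0 0 b
    rw [zero_add, zero_add, h00, add_zero] at h
    exact add_eq_left.mp h
  letI G := twGroup d hco hsym h0
  letI : Module ℤ (Tw S Λ) := AddCommGroup.toIntModule _
  let p : Tw S Λ →+ Λ :=
    { toFun := fun x => x.2, map_zero' := rfl, map_add' := fun x y => rfl }
  obtain ⟨h, hh⟩ := Module.projective_lifting_property (R := ℤ)
    p.toIntLinearMap LinearMap.id (fun l => ⟨((0 : S), l), rfl⟩)
  have h2 : ∀ l : Λ, (h l).2 = l := fun l => congrFun (congrArg (⇑) hh) l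
  refine ⟨fun l => -(h l).1, fun a b => ?_⟩
  have hadd : (h (a + b)).1 = (h a).1 + (h b).1 + d a b := by
    rw [map_add]
    show (twAdd d (h a) (h b)).1 = _
    unfold twAdd
    rw [h2, h2]
  show -(h a).1 + -(h b).1 - -(h (a + b)).1 = d a b
  rw [hadd]; abel

end HalfFormAux

open Multiplicative

/-- Given a central extension `1 → S¹ → Λ̂ → Λ → 1` of a free abelian group
`Λ` of finite rank by `S¹ = ℝ/ℤ` with commutator map `b`, and an antisymmetric biadditive
`B : Λ × Λ → ℝ` with `[B(λ,μ)] = b(λ,μ)`, there exists a set-theoretic section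
`τ : Λ → Λ̂` with `τ(λ)τ(μ) = τ(λ+μ)·[½B(λ,μ)]`. -/
theorem exists_section_with_half_form_cocycle
    (Λ : Type*) [AddCommGroup Λ] [Module.Free ℤ Λ] [Module.Finite ℤ Λ]
    (Λhat : Type*) [Group Λhat]
    (ι : Multiplicative (AddCircle (1:ℝ)) →* Λhat)
    (π : Λhat →* Multiplicative Λ)
    (hι : Function.Injective ι)
    (hπ : Function.Surjective π)
    (hexact : ∀ g : Λhat, π g = 1 ↔ g ∈ ι.range)
    (hcentral : ∀ (s : Multiplicative (AddCircle (1:ℝ))) (g : Λhat), ι s * g = g * ι s)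
    (B : Λ →+ Λ →+ ℝ) (hB : ∀ l m : Λ, B l m = - B m l)
    (hcomm : ∀ x y : Λhat,
      x⁻¹ * y⁻¹ * x * y =
        ι (Multiplicative.ofAdd
          ((B (Multiplicative.toAdd (π x)) (Multiplicative.toAdd (π y)) : ℝ) :
            AddCircle (1:ℝ)))) :
    ∃ τ : Λ → Λhat,
      (∀ l : Λ, π (τ l) = Multiplicative.ofAdd l) ∧
      (∀ l m : Λ, τ l * τ m =
        τ (l + m) * ι (Multiplicative.ofAdd ((B l m / 2 : ℝ) : AddCircle (1:ℝ)))) := by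
  classical
  set m : ℝ →+ AddCircle (1:ℝ) := QuotientAddGroup.mk' _ with hm_def
  have hm : ∀ x : ℝ, ((x : ℝ) : AddCircle (1:ℝ)) = m x := fun _ => rfl
  set σ : Λ → Λhat := fun l => Function.surjInv hπ (ofAdd l) with hσ_def
  have hσ : ∀ l, π (σ l) = ofAdd l := fun l => Function.surjInv_eq hπ _
  have hπι : ∀ s, π (ι s) = 1 := fun s => (hexact _).mpr ⟨s, rfl⟩
  have hmul : ∀ s t : AddCircle (1:ℝ),
      ι (ofAdd s) * ι (ofAdd t) = ι (ofAdd (s + t)) := by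
    intro s t; rw [← map_mul, ofAdd_add]
  have hcan : ∀ (g : Λhat) (s t : AddCircle (1:ℝ)),
      g * ι (ofAdd s) = g * ι (ofAdd t) → s = t := by
    intro g s t hst
    have := hι (mul_left_cancel hst)
    exact ofAdd.injective this
  have hE : ∀ a b : Λ, ∃ s : AddCircle (1:ℝ),
      σ a * σ b = σ (a + b) * ι (ofAdd s) := by
    intro a b
    have h1 : π ((σ (a + b))⁻¹ * (σ a * σ b)) = 1 := by
      rw [map_mul, map_inv, map_mul, hσ, hσ, hσ, ofAdd_add]
      exact inv_mul_cancel _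
    obtain ⟨s, hs⟩ := (hexact _).mp h1
    refine ⟨toAdd s, ?_⟩
    rw [ofAdd_toAdd, hs, ← mul_assoc, mul_inv_cancel, one_mul]
  choose e he using hE
  -- cocycle identity for e
  have hco_e : ∀ a b c : Λ, e b c + e a (b + c) = e (a + b) c + e a b := by
    intro a b c
    have lhs : σ a * σ b * σ c = σ (a + b + c) * ι (ofAdd (e (a + b) c + e a b)) := by
      rw [he a b, mul_assoc, hcentral, ← mul_assoc, he (a + b) c, mul_assoc, hmul]
    have rhs : σ a * σ b * σ c = σ (a + b + c) * ι (ofAdd (e a (b + c) + e b c)) := by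
      rw [mul_assoc, he b c, ← mul_assoc, he a (b + c), mul_assoc, hmul, add_assoc]
    have := hcan _ _ _ (rhs.symm.trans lhs)
    rw [add_comm (e a (b + c))] at this
    exact this
  -- commutator relation
  have hcomm' : ∀ a b : Λ, σ a * σ b = σ b * σ a * ι (ofAdd (m (B a b))) := by
    intro a b
    have h := hcomm (σ a) (σ b)
    rw [hσ, hσ, toAdd_ofAdd, toAdd_ofAdd, hm] at h
    calc σ a * σ b = σ b * σ a * ((σ a)⁻¹ * (σ b)⁻¹ * σ a * σ b) := by group
    _ = _ := by rw [h]
  have hsym_e : ∀ a b : Λ, e a b = e b a + m (B a b) := by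
    intro a b
    have h1 : σ (a + b) * ι (ofAdd (e a b)) =
        σ (a + b) * ι (ofAdd (e b a + m (B a b))) := by
      rw [← he a b, hcomm' a b, he b a, add_comm b a, mul_assoc, hmul]
    exact hcan _ _ _ h1
  -- the symmetric cocycle d
  set d : Λ → Λ → AddCircle (1:ℝ) :=
    fun a b => e a b - m (B a b / 2) - e 0 0 with hd_def
  have key : ∀ A Bv C D A' B' C' D' K : AddCircle (1:ℝ),
      A + C = A' + C' → Bv + D = B' + D' →
      (A - Bv - K) + (C - D - K) = (A' - B' - K) + (C' - D' - K) := by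
    intro A Bv C D A' B' C' D' K h1 h2
    have h3 : ∀ X Y Z W : AddCircle (1:ℝ),
        (X - Y - K) + (Z - W - K) = (X + Z) - (Y + W) - K - K := by
      intro X Y Z W; abel
    rw [h3, h3, h1, h2]
  have hd_co : ∀ a b c, d b c + d a (b + c) = d (a + b) c + d a b := by
    intro a b c
    have hreal : B b c / 2 + B a (b + c) / 2 = B (a + b) c / 2 + B a b / 2 := by
      simp [map_add, AddMonoidHom.add_apply]; ring
    refine key _ _ _ _ _ _ _ _ _ (hco_e a b c) ?_
    rw [← map_add, ← map_add, hreal]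
  have hd_sym : ∀ a b, d a b = d b a := by
    intro a b
    have hy : (B b a : ℝ) / 2 = -(B a b / 2) := by rw [hB b a]; ring
    have hxx : m (B a b) = m (B a b / 2) + m (B a b / 2) := by
      rw [← map_add]; congr 1; ring
    rw [hd_def]
    dsimp only
    rw [hsym_e a b, hy, map_neg, hxx]
    abel
  have hd00 : d 0 0 = 0 := by
    have : (B 0 0 : ℝ) = 0 := by simp
    rw [hd_def]
    dsimp only
    rw [this, zero_div, map_zero]
    abel
  obtain ⟨φ, hφ⟩ := HalfFormAux.split_cocycle d hd_co hd_sym hd00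
  set ψ : Λ → AddCircle (1:ℝ) := fun l => φ l + e 0 0 with hψ_def
  refine ⟨fun l => σ l * ι (ofAdd (-ψ l)), fun l => ?_, fun l mm => ?_⟩
  · rw [map_mul, hσ, hπι, mul_one]
  · have hL : σ l * ι (ofAdd (-ψ l)) * (σ mm * ι (ofAdd (-ψ mm))) =
        σ (l + mm) * ι (ofAdd (e l mm + (-ψ l + -ψ mm))) := by
      rw [mul_assoc, ← mul_assoc (ι (ofAdd (-ψ l))), hcentral, mul_assoc (σ mm), hmul,
        ← mul_assoc, he l mm, mul_assoc, hmul]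
    have hR : σ (l + mm) * ι (ofAdd (-ψ (l + mm))) * ι (ofAdd (m (B l mm / 2))) =
        σ (l + mm) * ι (ofAdd (-ψ (l + mm) + m (B l mm / 2))) := by
      rw [mul_assoc, hmul]
    have hkey : e l mm + (-ψ l + -ψ mm) = -ψ (l + mm) + m (B l mm / 2) := by
      have hd := hφ l mm
      rw [hd_def] at hd
      dsimp only at hd
      have he' : e l mm = φ l + φ mm - φ (l + mm) + m (B l mm / 2) + e 0 0 := by
        rw [hd]; abel
      rw [hψ_def]
      dsimp only
      rw [he']; abel
    rw [hL, hm, hR, hkey]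
end

section
/- Let G be a locally compact group with left Haar measure, acting continuously and properly on a locally compact Hausdorff space M, and let V be a real vector space. Suppose χ : M → ℝ is a continuous function such that ∫_G χ(γ⁻¹·m) dγ = 1 for all m ∈ M (with the integral well-defined). If f : G × M → V satisfies the cocycle identity f(γ₁γ₂, m) = f(γ₁, m) + γ₁·f(γ₂, γ₁⁻¹ m) appropriately interpreted as df = 0 in the homogeneous bar complex, then f is a coboundary: there exists h : M → V with (dh) = ± f. In the simplest degree, if f : G × M → ℝ satisfies f(γ₁γ₂,m) = f(γ₂,m) + f(γ₁, γ₂ m) for all γ₁,γ₂ ∈ G, m ∈ M, then h(m) := ∫_G χ(γ⁻¹ m) f(γ, γ⁻¹ m) dγ satisfies f(γ, m) = h(γ m) − h(m) for all γ, m. -/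
open MeasureTheory

/-- degree-one case: Let `G` be a locally compact group with left Haar
measure `μ` acting continuously and properly on a locally compact Hausdorff space `M`, and
let `χ : M → ℝ` be continuous with `∫_G χ(γ⁻¹·m) dμ(γ) = 1` for all `m`.  If
`f : G × M → ℝ` satisfies the cocycle identity `f(γ₁γ₂, m) = f(γ₂, m) + f(γ₁, γ₂·m)`,
then `h(m) := ∫_G χ(γ⁻¹·m)·f(γ, γ⁻¹·m) dμ(γ)` satisfies
`f(γ, m) = h(γ·m) − h(m)` for all `γ, m`. -/
theorem cocycle_is_coboundary
    (G : Type*) [Group G] [TopologicalSpace G] [IsTopologicalGroup G]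
    [LocallyCompactSpace G] [MeasurableSpace G] [BorelSpace G]
    (M : Type*) [TopologicalSpace M] [LocallyCompactSpace M] [T2Space M]
    [MulAction G M] [ContinuousSMul G M]
    (μ : Measure G) [μ.IsHaarMeasure]
    (χ : M → ℝ) (hχcont : Continuous χ)
    (f : G → M → ℝ) (hfcont : Continuous fun p : G × M => f p.1 p.2)
    (hint : ∀ m : M, Integrable (fun γ : G => χ (γ⁻¹ • m) * f γ (γ⁻¹ • m)) μ)
    (hχint : ∀ m : M, Integrable (fun γ : G => χ (γ⁻¹ • m)) μ)
    (hχone : ∀ m : M, ∫ γ : G, χ (γ⁻¹ • m) ∂μ = 1)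
    (hcoc : ∀ (γ₁ γ₂ : G) (m : M), f (γ₁ * γ₂) m = f γ₂ m + f γ₁ (γ₂ • m)) :
    ∀ (γ : G) (m : M),
      f γ m = (∫ δ : G, χ (δ⁻¹ • (γ • m)) * f δ (δ⁻¹ • (γ • m)) ∂μ) -
        ∫ δ : G, χ (δ⁻¹ • m) * f δ (δ⁻¹ • m) ∂μ := by
  intro γ m
  have key : (∫ δ : G, χ (δ⁻¹ • (γ • m)) * f δ (δ⁻¹ • (γ • m)) ∂μ)
      = ∫ δ : G, (χ (δ⁻¹ • m) * f δ (δ⁻¹ • m) + χ (δ⁻¹ • m) * f γ m) ∂μ := by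
    rw [← integral_mul_left_eq_self (fun δ : G => χ (δ⁻¹ • (γ • m)) * f δ (δ⁻¹ • (γ • m))) γ]
    congr 1
    ext δ
    have h1 : (γ * δ)⁻¹ • (γ • m) = δ⁻¹ • m := by
      rw [mul_inv_rev, mul_smul, inv_smul_smul]
    rw [h1, hcoc γ δ (δ⁻¹ • m), smul_inv_smul, mul_add]
  rw [key, integral_add (hint m) ((hχint m).mul_const _), integral_mul_const, hχone m,
    one_mul]
  ring
end
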